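/- arXiv:1610.02861 — 4 statements merged into one kernel-verified Lean document; each statement's English description precedes it below -/
import Mathlib

section
/- Σ over all ordered partitions I = (I_1,...,I_k) of {1,...,n} into k disjoint nonempty blocks of (#I_1)!···(#I_k)! equals n!·binom(n-1,k-1). -/
open Finset

open scoped Classical


lemma card_filter_attach {α : Type*} (s : Finset α) (p : α → Prop) [DecidablePred p] :
    ((s.attach).filter fun x => p x.1).card = (s.filter p).card := by
  apply Finset.card_bij (fun (x : {a // a ∈ s}) _ => x.1)
  · intro a ha
    simp only [mem_filter, mem_attach, true_and] at ha
    simp [a.2, ha]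
  · intro a _ b _ h; exact Subtype.ext h
  · intro b hb
    simp only [mem_filter] at hb
    exact ⟨⟨b, hb.1⟩, by simp [hb.2], rfl⟩

lemma hockey (k m : ℕ) : ∑ j ∈ range (m+1), (j + k).choose k = (m + k + 1).choose (k + 1) := by
  induction m with
  | zero => simp
  | succ m ih =>
    rw [Finset.sum_range_succ, ih]
    have h1 : m + 1 + k + 1 = (m + k + 1) + 1 := by ring
    rw [h1, Nat.choose_succ_succ (m + k + 1) k]
    have h2 : m + 1 + k = m + k + 1 := by ring
    rw [h2]
    simp only [Nat.succ_eq_add_one]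
    omega

lemma card_adt (k : ℕ) : ∀ m, (Finset.Nat.antidiagonalTuple (k+1) m).card = (m + k).choose k := by
  induction k with
  | zero => intro m; simp
  | succ k ih =>
    intro m
    have hmap : ∀ x ∈ Finset.Nat.antidiagonalTuple (k+1+1) m,
        x (Fin.last (k+1)) ∈ range (m+1) := by
      intro x hx
      rw [Finset.Nat.mem_antidiagonalTuple] at hx
      rw [mem_range]
      have := Finset.single_le_sum (f := x) (fun i _ => Nat.zero_le _) (mem_univ (Fin.last (k+1)))
      omega
    rw [Finset.card_eq_sum_card_fiberwise hmap]
    have hfib : ∀ j ∈ range (m+1),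
        ((Finset.Nat.antidiagonalTuple (k+1+1) m).filter fun x => x (Fin.last (k+1)) = j).card
          = (Finset.Nat.antidiagonalTuple (k+1) (m - j)).card := by
      intro j hj
      rw [mem_range] at hj
      apply Finset.card_nbij' (i := fun x => x ∘ Fin.castSucc) (j := fun y => Fin.snoc y j)
      · intro x hx
        simp only [mem_coe, mem_filter, Finset.Nat.mem_antidiagonalTuple] at hx ⊢
        rw [Fin.sum_univ_castSucc] at hx
        simp only [Function.comp]
        omega
      · intro y hy
        simp only [mem_coe, Finset.Nat.mem_antidiagonalTuple] at hy
        simp only [mem_coe, mem_filter, Finset.Nat.mem_antidiagonalTuple, Fin.sum_univ_castSucc,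
          Fin.snoc_castSucc, Fin.snoc_last, hy, and_true]
        omega
      · intro x hx
        simp only [mem_coe, mem_filter] at hx
        rw [← hx.2]
        exact Fin.snoc_init_self x
      · intro y _
        funext i
        simp [Fin.snoc_castSucc]
    rw [Finset.sum_congr rfl hfib]
    have h2 : ∀ j ∈ range (m+1), (Finset.Nat.antidiagonalTuple (k+1) (m-j)).card
        = ((m - j) + k).choose k := fun j _ => ih (m - j)
    rw [Finset.sum_congr rfl h2]
    have h3 : ∀ j ∈ range (m+1), ((m - j) + k).choose k = (m + 1 - 1 - j + k).choose k := by
      intro j hj; congr 2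
    rw [Finset.sum_congr rfl h3, Finset.sum_range_reflect (fun j => ((j + k).choose k)) (m+1),
      hockey]
    congr 1

lemma card_pos_comps (n k : ℕ) (hk : 0 < k) (hkn : k ≤ n) :
    ((Finset.Nat.antidiagonalTuple k n).filter fun c => ∀ l, 0 < c l).card
      = (n - 1).choose (k - 1) := by
  have key : ((Finset.Nat.antidiagonalTuple k n).filter fun c => ∀ l, 0 < c l).card
      = (Finset.Nat.antidiagonalTuple k (n - k)).card := by
    apply Finset.card_nbij' (i := fun c l => c l - 1) (j := fun d l => d l + 1)
    · intro c hc
      simp only [mem_coe, mem_filter, Finset.Nat.mem_antidiagonalTuple] at hc ⊢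
      obtain ⟨hsum, hpos⟩ := hc
      have h1 : ∑ l, (c l - 1 + 1) = n := by
        rw [Finset.sum_congr rfl (fun l _ => by have := hpos l; omega : ∀ l ∈ univ, c l - 1 + 1 = c l)]
        exact hsum
      rw [Finset.sum_add_distrib] at h1
      simp only [Finset.sum_const, card_univ, Fintype.card_fin, smul_eq_mul, mul_one] at h1
      omega
    · intro d hd
      simp only [mem_coe, Finset.Nat.mem_antidiagonalTuple] at hd
      simp only [mem_coe, mem_filter, Finset.Nat.mem_antidiagonalTuple]
      constructor
      · rw [Finset.sum_add_distrib]
        simp only [Finset.sum_const, card_univ, Fintype.card_fin, smul_eq_mul, mul_one, hd]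
        omega
      · intro l; omega
    · intro c hc
      simp only [mem_coe, mem_filter] at hc
      funext l
      have := hc.2 l
      change c l - 1 + 1 = c l
      omega
    · intro d _
      funext l
      change d l + 1 - 1 = d l
      omega
  rw [key]
  obtain ⟨k', rfl⟩ := Nat.exists_eq_succ_of_ne_zero hk.ne'
  rw [card_adt k' (n - (k' + 1))]
  clear key
  have h5 : n - (k' + 1) + k' = n - 1 := by omega
  rw [h5]
  simp


lemma count_fibers (k : ℕ) : ∀ (α : Type) [Fintype α] [DecidableEq α] (c : Fin k → ℕ),
    (∑ l, c l = Fintype.card α) →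
    ((univ : Finset (α → Fin k)).filter
        (fun f => ∀ l, (univ.filter fun i => f i = l).card = c l)).card
      * ∏ l, (c l).factorial = (Fintype.card α).factorial := by
  induction k with
  | zero =>
    intro α _ _ c h
    have hα : Fintype.card α = 0 := by simpa using h.symm
    rw [Finset.filter_true_of_mem (fun f _ => fun l => l.elim0)]
    simp [Finset.card_univ, Fintype.card_fun, hα]
  | succ k ih =>
    intro α _ _ c h
    set n := Fintype.card α with hn
    set m := c (Fin.last k) with hm
    have hm_le : m ≤ n := by
      rw [← h]
      exact Finset.single_le_sum (fun i _ => Nat.zero_le _) (mem_univ _)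
    have hsum' : ∑ l : Fin k, c l.castSucc = n - m := by
      rw [Fin.sum_univ_castSucc] at h
      omega
    set S := (univ : Finset (α → Fin (k+1))).filter
        (fun f => ∀ l, (univ.filter fun i => f i = l).card = c l) with hS
    have hmap : ∀ f ∈ S, (univ.filter fun i => f i = Fin.last k) ∈ univ.powersetCard m := by
      intro f hf
      rw [mem_powersetCard]
      simp only [hS, mem_filter] at hf
      exact ⟨subset_univ _, hf.2 (Fin.last k)⟩
    have hcard := Finset.card_eq_sum_card_fiberwise hmap
    have hfib : ∀ A ∈ univ.powersetCard m,
        (S.filter fun f => (univ.filter fun i => f i = Fin.last k) = A).card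
          * ∏ l : Fin k, (c l.castSucc).factorial = (n - m).factorial := by
      intro A hA
      rw [mem_powersetCard] at hA
      have hAcard : A.card = m := hA.2
      have hcard2 : (S.filter fun f => (univ.filter fun i => f i = Fin.last k) = A).card
          = ((univ : Finset ({x // x ∈ univ \ A} → Fin k)).filter
              (fun g => ∀ l, (univ.filter fun x => g x = l).card = c l.castSucc)).card := by
        apply Finset.card_bij (fun f hf => fun x : {x // x ∈ univ \ A} =>
          Fin.castPred (f x.1) (by
            simp only [mem_filter] at hf
            have hx : x.1 ∉ A := by
              have h3 := x.2
              simp only [mem_sdiff, mem_univ, true_and] at h3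
              exact h3
            intro hlast
            apply hx
            have h4 : x.1 ∈ filter (fun i => f i = Fin.last k) univ := by
              simp [hlast]
            rw [hf.2] at h4
            exact h4))
        · -- maps into target
          intro f hf
          simp only [mem_filter, mem_univ, true_and]
          intro l
          simp only [mem_filter] at hf
          obtain ⟨hfS, hfA⟩ := hf
          simp only [hS, mem_filter, mem_univ, true_and] at hfS
          simp only [Fin.castPred_eq_iff_eq_castSucc]
          rw [Finset.univ_eq_attach, card_filter_attach (univ \ A) (fun i => f i = Fin.castSucc l)]
          have hset : (univ \ A).filter (fun i => f i = Fin.castSucc l)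
              = univ.filter (fun i => f i = Fin.castSucc l) := by
            ext i
            simp only [mem_filter, mem_sdiff, mem_univ, true_and]
            constructor
            · intro hi; exact hi.2
            · intro hi
              refine ⟨?_, hi⟩
              intro hiA
              rw [← hfA] at hiA
              simp only [mem_filter, mem_univ, true_and] at hiA
              rw [hi] at hiA
              exact (Fin.castSucc_lt_last l).ne hiA
          rw [hset, hfS l.castSucc]
        · -- injective
          intro f hf g hg heq
          simp only [mem_filter] at hf hg
          funext a
          by_cases ha : a ∈ A
          · have h1 : f a = Fin.last k := by
              rw [← hf.2] at ha
              simp only [mem_filter, mem_univ, true_and] at ha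
              exact ha
            have h2 : g a = Fin.last k := by
              rw [← hg.2] at ha
              simp only [mem_filter, mem_univ, true_and] at ha
              exact ha
            rw [h1, h2]
          · have hmem : a ∈ univ \ A := by simp [ha]
            have h3 := congrFun heq ⟨a, hmem⟩
            have h4 := congrArg Fin.castSucc h3
            rwa [Fin.castSucc_castPred, Fin.castSucc_castPred] at h4
        · -- surjective
          intro g hg
          simp only [mem_filter, mem_univ, true_and] at hg
          refine ⟨fun a => if ha : a ∈ A then Fin.last k
            else (g ⟨a, by simp [ha]⟩).castSucc, ?_, ?_⟩
          · have hfibA : (univ.filter fun i =>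
                (if ha : i ∈ A then Fin.last k
                  else (g ⟨i, by simp [ha]⟩).castSucc) = Fin.last k) = A := by
              ext a
              simp only [mem_filter, mem_univ, true_and]
              by_cases ha : a ∈ A
              · simp [ha]
              · simp only [ha, dif_neg, not_false_iff, iff_false]
                exact (Fin.castSucc_lt_last _).ne
            simp only [mem_filter, mem_univ, true_and]
            constructor
            · simp only [hS, mem_filter, mem_univ, true_and]
              intro l
              induction l using Fin.lastCases with
              | last => rw [hfibA, hAcard]
              | cast l =>
                have hset : (univ.filter fun a =>
                    (if ha : a ∈ A then Fin.last k
                      else (g ⟨a, by simp [ha]⟩).castSucc) = Fin.castSucc l)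
                    = (univ \ A).filter (fun a =>
                    (if ha : a ∈ A then Fin.last k
                      else (g ⟨a, by simp [ha]⟩).castSucc) = Fin.castSucc l) := by
                  ext a
                  simp only [mem_filter, mem_sdiff, mem_univ, true_and]
                  constructor
                  · intro hcond
                    refine ⟨?_, hcond⟩
                    intro haA
                    rw [dif_pos haA] at hcond
                    exact (Fin.castSucc_lt_last l).ne hcond.symm
                  · intro hcond; exact hcond.2
                rw [hset, ← card_filter_attach (univ \ A)]
                rw [← hg l]
                apply Finset.card_nbij' (i := fun x => x) (j := fun x => x)
                · intro x hx
                  simp only [mem_coe, mem_filter, mem_attach, true_and] at hx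
                  simp only [mem_coe, mem_filter, mem_univ, true_and]
                  have hxA : x.1 ∉ A := by
                    have h3 := x.2
                    simp only [mem_sdiff, mem_univ, true_and] at h3
                    exact h3
                  rw [dif_neg hxA, Subtype.coe_eta] at hx
                  exact Fin.castSucc_injective k hx
                · intro x hx
                  simp only [mem_coe, mem_filter, mem_univ, true_and] at hx
                  simp only [mem_coe, mem_filter, mem_attach, true_and]
                  have hxA : x.1 ∉ A := by
                    have h3 := x.2
                    simp only [mem_sdiff, mem_univ, true_and] at h3
                    exact h3
                  rw [dif_neg hxA, Subtype.coe_eta, hx]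
                · intro x _; rfl
                · intro x _; rfl
            · exact hfibA
          · funext x
            have hxA : x.1 ∉ A := by
              have h3 := x.2
              simp only [mem_sdiff, mem_univ, true_and] at h3
              exact h3
            have h5 : (if ha : x.1 ∈ A then Fin.last k
                else (g ⟨x.1, by simp [ha]⟩).castSucc) = (g x).castSucc := by
              rw [dif_neg hxA, Subtype.coe_eta]
            simp only [h5, Fin.castPred_castSucc]
      rw [hcard2]
      have hcardsub : @Fintype.card {x // x ∈ univ \ A} (Finset.Subtype.fintype (univ \ A)) = n - m := by
        rw [Fintype.card_coe, card_sdiff_of_subset (subset_univ A), card_univ, hAcard]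
      have htmp := @ih {x // x ∈ univ \ A} (Finset.Subtype.fintype (univ \ A)) _
        (fun l => c l.castSucc) (by rw [hcardsub]; exact hsum')
      rw [hcardsub] at htmp
      simpa using htmp
    calc S.card * ∏ l : Fin (k+1), (c l).factorial
        = (∑ A ∈ univ.powersetCard m,
            (S.filter fun f => (univ.filter fun i => f i = Fin.last k) = A).card)
          * ((∏ l : Fin k, (c l.castSucc).factorial) * m.factorial) := by
          rw [← hcard, Fin.prod_univ_castSucc]
      _ = ∑ A ∈ univ.powersetCard m,
            ((S.filter fun f => (univ.filter fun i => f i = Fin.last k) = A).card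
              * ∏ l : Fin k, (c l.castSucc).factorial) * m.factorial := by
          rw [Finset.sum_mul]
          apply Finset.sum_congr rfl
          intros; ring
      _ = ∑ A ∈ univ.powersetCard m, (n - m).factorial * m.factorial := by
          apply Finset.sum_congr rfl
          intro A hA
          rw [hfib A hA]
      _ = n.choose m * ((n - m).factorial * m.factorial) := by
          rw [Finset.sum_const, Finset.card_powersetCard, card_univ, ← hn, smul_eq_mul]
      _ = n.factorial := by
          rw [← Nat.choose_mul_factorial_mul_factorial hm_le]
          ring

open scoped Classical in
/-- Summing `(#I_1)!⋯(#I_k)!` over all ordered partitions `I = (I_1,...,I_k)` of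
`{1,...,n}` into `k` disjoint nonempty blocks (encoded as surjections
`f : Fin n → Fin k`) gives `n!·binom(n-1,k-1)`. -/
theorem stmt11 (n k : ℕ) (hk : 0 < k) (hkn : k ≤ n) :
    (∑ f ∈ (univ : Finset (Fin n → Fin k)).filter (fun f => Function.Surjective f),
        ∏ l : Fin k, Nat.factorial (univ.filter (fun i => f i = l)).card)
      = Nat.factorial n * Nat.choose (n - 1) (k - 1) := by
  have hmaps : ∀ f ∈ (univ : Finset (Fin n → Fin k)).filter (fun f => Function.Surjective f),
      (fun l => (univ.filter fun i => f i = l).card)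
        ∈ (Finset.Nat.antidiagonalTuple k n).filter (fun c => ∀ l, 0 < c l) := by
    intro f hf
    simp only [mem_filter, mem_univ, true_and] at hf
    simp only [mem_filter, Finset.Nat.mem_antidiagonalTuple]
    constructor
    · have h1 := (Finset.card_eq_sum_card_fiberwise
        (f := f) (s := univ) (t := univ) (fun x _ => mem_univ _)).symm
      simpa using h1
    · intro l
      obtain ⟨i, hi⟩ := hf l
      rw [Finset.card_pos]
      exact ⟨i, by simp [hi]⟩
  rw [← Finset.sum_fiberwise_of_maps_to hmaps]
  have hterm : ∀ c ∈ (Finset.Nat.antidiagonalTuple k n).filter (fun c => ∀ l, 0 < c l),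
      (∑ f ∈ ((univ : Finset (Fin n → Fin k)).filter (fun f => Function.Surjective f)).filter
          (fun f => (fun l => (univ.filter fun i => f i = l).card) = c),
        ∏ l : Fin k, Nat.factorial (univ.filter (fun i => f i = l)).card)
        = Nat.factorial n := by
    intro c hc
    simp only [mem_filter, Finset.Nat.mem_antidiagonalTuple] at hc
    obtain ⟨hcsum, hcpos⟩ := hc
    have hset : ((univ : Finset (Fin n → Fin k)).filter (fun f => Function.Surjective f)).filter
        (fun f => (fun l => (univ.filter fun i => f i = l).card) = c)
        = univ.filter (fun f => ∀ l, (univ.filter fun i => f i = l).card = c l) := by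
      rw [Finset.filter_filter]
      apply Finset.filter_congr
      intro f _
      constructor
      · rintro ⟨hsurj, hgf⟩
        intro l
        exact congrFun hgf l
      · intro hl
        constructor
        · intro l
          have h2 := hl l
          obtain ⟨i, hi⟩ := Finset.card_pos.mp (by rw [h2]; exact hcpos l)
          simp only [mem_filter, mem_univ, true_and] at hi
          exact ⟨i, hi⟩
        · funext l
          exact hl l
    rw [hset]
    rw [Finset.sum_congr rfl (fun f hf => Finset.prod_congr rfl
      (fun l _ => by rw [(Finset.mem_filter.mp hf).2 l]))]
    rw [Finset.sum_const, smul_eq_mul]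
    have := count_fibers k (Fin n) c (by simpa using hcsum)
    simpa using this
  rw [Finset.sum_congr rfl hterm, Finset.sum_const, smul_eq_mul,
    card_pos_comps n k hk hkn, mul_comm]
end

section
/- Let x_1,...,x_n ∈ R^d with partial sums s_i = x_1 + ... + x_i, and let A : R^n → R^d be the linear map with A e_i = x_i. For indices 1 ≤ i_1 < ... < i_k ≤ n, the origin 0 lies in the convex hull of {s_{i_1},...,s_{i_k}} if and only if the k-dimensional face F of the cone C^B = {β : β_1 ≥ ... ≥ β_n ≥ 0} indexed by (i_1,...,i_k) satisfies F ∩ ker A ≠ {0}. -/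
open Finset

/-- Let `x_1,...,x_n ∈ ℝ^d` with partial sums `s_i`, and let `A : ℝ^n → ℝ^d` be the
linear map with `A e_i = x_i`, i.e. `A β = Σ_i β_i x_i`. For `1 ≤ i_1 < ... < i_k ≤ n`
(given by a strictly monotone `ι : Fin k → Fin n`), the origin lies in the convex hull
of `{s_{i_1},...,s_{i_k}}` iff the `k`-face `F` of `C^B = {β : β_1 ≥ ... ≥ β_n ≥ 0}`
indexed by `(i_1,...,i_k)` satisfies `F ∩ ker A ≠ {0}`. -/
theorem stmt13 (d n k : ℕ) (hk : 0 < k) (hkn : k ≤ n)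
    (x : Fin n → Fin d → ℝ)
    (s : Fin n → Fin d → ℝ) (hs : ∀ i, s i = ∑ m ∈ Finset.Iic i, x m)
    (ι : Fin k → Fin n) (hι : StrictMono ι) :
    (0 : Fin d → ℝ) ∈ convexHull ℝ (Set.range fun l => s (ι l)) ↔
      ∃ β : Fin n → ℝ, β ≠ 0 ∧ (∑ i, β i • x i) = 0 ∧
        (∀ i j : Fin n, i ≤ j → β j ≤ β i) ∧ (∀ i, 0 ≤ β i) ∧
        (∀ m : Fin n, (∀ l, ι l ≠ m) →
          (∀ h : (m : ℕ) + 1 < n, β m = β ⟨(m : ℕ) + 1, h⟩) ∧ ((m : ℕ) + 1 = n → β m = 0)) := by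
  have hn : 0 < n := lt_of_lt_of_le hk hkn
  constructor
  · -- forward direction
    intro h0
    rw [convexHull_range_eq_exists_affineCombination] at h0
    obtain ⟨t, w, hw0, hw1, hwc⟩ := h0
    rw [Finset.affineCombination_eq_linear_combination _ _ _ hw1] at hwc
    set W : Fin k → ℝ := fun l => if l ∈ t then w l else 0 with hWdef
    have hW0 : ∀ l, 0 ≤ W l := by
      intro l
      by_cases hl : l ∈ t <;> simp [hWdef, hl]
      exact hw0 l hl
    have hW1 : ∑ l, W l = 1 := by
      rw [← hw1]
      simp [hWdef, Finset.sum_ite_mem]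
    have hWc : ∑ l, W l • s (ι l) = 0 := by
      rw [← hwc]
      simp only [hWdef, ite_smul, zero_smul]
      rw [Finset.sum_ite_mem, Finset.univ_inter]
    refine ⟨fun m => ∑ l ∈ univ.filter (fun l => m ≤ ι l), W l, ?_, ?_, ?_, ?_, ?_⟩
    · -- nonzero
      intro hcon
      have h1 : ∑ l ∈ univ.filter (fun l => (⟨0, hn⟩ : Fin n) ≤ ι l), W l = 0 :=
        congrFun hcon ⟨0, hn⟩
      have : univ.filter (fun l => (⟨0, hn⟩ : Fin n) ≤ ι l) = univ := by
        apply Finset.filter_true_of_mem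
        intro l _
        exact Fin.mk_le_of_le_val (Nat.zero_le _)
      rw [this, hW1] at h1
      exact one_ne_zero h1
    · -- sum is zero
      rw [← hWc]
      have key : ∀ m : Fin n,
          (∑ l ∈ univ.filter (fun l => m ≤ ι l), W l) • x m
            = ∑ l, if m ≤ ι l then W l • x m else 0 := by
        intro m
        rw [Finset.sum_smul, Finset.sum_filter]
      simp_rw [key]
      rw [Finset.sum_comm]
      apply Finset.sum_congr rfl
      intro l _
      have : ∑ m, (if m ≤ ι l then W l • x m else 0) = ∑ m ∈ Finset.Iic (ι l), W l • x m := by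
        rw [← Finset.sum_filter]
        apply Finset.sum_congr _ (fun _ _ => rfl)
        ext m
        simp only [Finset.mem_filter, Finset.mem_univ, true_and, Finset.mem_Iic]
      rw [this, ← Finset.smul_sum, ← hs]
    · -- antitone
      intro i j hij
      apply Finset.sum_le_sum_of_subset_of_nonneg
      · intro l hl
        simp only [Finset.mem_filter, Finset.mem_univ, true_and] at hl ⊢
        exact le_trans hij hl
      · intro l _ _; exact hW0 l
    · -- nonneg
      intro i
      exact Finset.sum_nonneg fun l _ => hW0 l
    · -- face conditions
      intro m hm
      constructor
      · intro h
        apply Finset.sum_congr _ (fun _ _ => rfl)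
        apply Finset.filter_congr
        intro l _
        have hne : (ι l : ℕ) ≠ (m : ℕ) := fun hc => hm l (Fin.ext hc)
        rw [Fin.le_def, Fin.le_def]
        show (m : ℕ) ≤ (ι l : ℕ) ↔ (m : ℕ) + 1 ≤ (ι l : ℕ)
        omega
      · intro h
        apply Finset.sum_eq_zero
        intro l hl
        simp only [Finset.mem_filter, Finset.mem_univ, true_and] at hl
        rw [Fin.le_def] at hl
        have h2 : (ι l : ℕ) < n := (ι l).isLt
        have : (m : ℕ) = (ι l : ℕ) := by omega
        exact absurd (Fin.ext this.symm) (hm l)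
  · -- backward direction
    rintro ⟨β, hβ0, hβc, hmono, hnn, hface⟩
    set b : ℕ → ℝ := fun j => if h : j < n then β ⟨j, h⟩ else 0 with hbdef
    have hb : ∀ m : Fin n, b m = β m := by
      intro m; simp [hbdef, m.isLt]
    set δ : Fin n → ℝ := fun m => b m - b (m + 1) with hδdef
    have hδ0 : ∀ m, 0 ≤ δ m := by
      intro m
      simp only [hδdef]
      rw [hb]
      by_cases h : (m : ℕ) + 1 < n
      · simp only [hbdef, h, dif_pos]
        have : m ≤ (⟨(m : ℕ) + 1, h⟩ : Fin n) := by
          rw [Fin.le_def]; exact Nat.le_succ _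
        linarith [hmono m _ this]
      · have hz : b ((m : ℕ) + 1) = 0 := by simp [hbdef, h]
        rw [hz]
        simpa using hnn m
    have hδrange : ∀ m, (∀ l, ι l ≠ m) → δ m = 0 := by
      intro m hm
      obtain ⟨h1, h2⟩ := hface m hm
      simp only [hδdef]
      rw [hb]
      by_cases h : (m : ℕ) + 1 < n
      · simp only [hbdef, h, dif_pos]
        rw [← h1 h]; ring
      · have hm1 : (m : ℕ) + 1 = n := by have := m.isLt; omega
        have hz : b ((m : ℕ) + 1) = 0 := by simp [hbdef, h]
        rw [hz, h2 hm1]; ring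
    -- crux: sum of δ over Ici q equals β q
    have crux : ∀ q : Fin n, ∑ m ∈ Finset.Ici q, δ m = β q := by
      intro q
      have e1 : ∑ m ∈ Finset.Ici q, δ m
          = ∑ m : Fin n, (if (q : ℕ) ≤ (m : ℕ) then b m - b (m + 1) else 0) := by
        rw [← Finset.sum_filter]
        apply Finset.sum_congr _ (fun _ _ => rfl)
        ext m
        simp only [Finset.mem_filter, Finset.mem_univ, true_and, Finset.mem_Ici, Fin.le_def]
      rw [e1, Fin.sum_univ_eq_sum_range (fun j => if (q : ℕ) ≤ j then b j - b (j + 1) else 0) n]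
      have e2 : ∑ j ∈ Finset.range n, (if (q : ℕ) ≤ j then b j - b (j + 1) else 0)
          = ∑ j ∈ Finset.Ico (q : ℕ) n, (b j - b (j + 1)) := by
        rw [← Finset.sum_filter]
        apply Finset.sum_congr _ (fun _ _ => rfl)
        ext j
        simp only [Finset.mem_filter, Finset.mem_range, Finset.mem_Ico]
        omega
      rw [e2, Finset.sum_Ico_eq_sub _ (le_of_lt q.isLt),
        Finset.sum_range_sub' b n, Finset.sum_range_sub' b (q : ℕ)]
      have hbn : b n = 0 := by simp [hbdef]
      rw [hbn, hb]
      ring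
    -- the key linear identity
    have habel : ∑ m, δ m • s m = ∑ p, β p • x p := by
      have key : ∀ m : Fin n, δ m • s m = ∑ p, if p ≤ m then δ m • x p else 0 := by
        intro m
        rw [hs m, Finset.smul_sum, ← Finset.sum_filter]
        apply Finset.sum_congr _ (fun _ _ => rfl)
        ext p
        simp only [Finset.mem_filter, Finset.mem_univ, true_and, Finset.mem_Iic]
      simp_rw [key]
      rw [Finset.sum_comm]
      apply Finset.sum_congr rfl
      intro p _
      have : ∑ m, (if p ≤ m then δ m • x p else 0) = ∑ m ∈ Finset.Ici p, δ m • x p := by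
        rw [← Finset.sum_filter]
        apply Finset.sum_congr _ (fun _ _ => rfl)
        ext m
        simp only [Finset.mem_filter, Finset.mem_univ, true_and, Finset.mem_Ici]
      rw [this, ← Finset.sum_smul, crux]
    have hinj : Function.Injective ι := hι.injective
    have hrestrict : ∀ v : Fin n → (Fin d → ℝ),
        (∀ m, (∀ l, ι l ≠ m) → (δ m) • v m = 0) →
        ∑ m, δ m • v m = ∑ l, δ (ι l) • v (ι l) := by
      intro v hv
      rw [← Finset.sum_image (f := fun m => δ m • v m) (g := ι)
        (fun a _ b _ hab => hinj hab)]
      apply (Finset.sum_subset (Finset.subset_univ _) _).symm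
      intro m _ hm
      apply hv
      intro l hl
      exact hm (Finset.mem_image.mpr ⟨l, Finset.mem_univ l, hl⟩)
    have hzero : ∑ l, δ (ι l) • s (ι l) = 0 := by
      rw [← hrestrict s ?_]
      · rw [habel, hβc]
      · intro m hm
        rw [hδrange m hm, zero_smul]
    have hsumδ : ∑ l, δ (ι l) = ∑ m, δ m := by
      rw [← Finset.sum_image (f := δ) (g := ι) (fun a _ b _ hab => hinj hab)]
      apply Finset.sum_subset (Finset.subset_univ _)
      intro m _ hm
      apply hδrange
      intro l hl
      exact hm (Finset.mem_image.mpr ⟨l, Finset.mem_univ l, hl⟩)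
    have hsumδ0 : ∑ m, δ m = β ⟨0, hn⟩ := by
      rw [← crux ⟨0, hn⟩]
      apply (Finset.sum_subset (Finset.subset_univ _) _).symm
      intro m _ hm
      exfalso
      apply hm
      rw [Finset.mem_Ici, Fin.le_def]
      exact Nat.zero_le _
    have hβ0pos : 0 < β ⟨0, hn⟩ := by
      obtain ⟨i, hi⟩ := Function.ne_iff.mp hβ0
      have h1 : 0 < β i := lt_of_le_of_ne (hnn i) (Ne.symm hi)
      have h2 : β i ≤ β ⟨0, hn⟩ := hmono _ _ (by rw [Fin.le_def]; exact Nat.zero_le _)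
      linarith
    have hpos : 0 < ∑ l, δ (ι l) := by rw [hsumδ, hsumδ0]; exact hβ0pos
    have hcm : Finset.univ.centerMass (fun l => δ (ι l)) (fun l => s (ι l)) = 0 := by
      rw [Finset.centerMass, hzero, smul_zero]
    rw [← hcm]
    exact Finset.centerMass_mem_convexHull _ (fun l _ => hδ0 (ι l)) hpos
      (fun l _ => Set.mem_range_self l)
end

section
/- Let x_1,...,x_n ∈ R^d (n ≥ 2) with x_1 + ... + x_n = 0 and partial sums s_i = x_1 + ... + x_i, and let A : R^n → R^d be the linear map with A e_i = x_i. For indices 1 ≤ i_1 < ... < i_k ≤ n-1, the origin lies in the convex hull of {s_{i_1},...,s_{i_k}} if and only if the (k+1)-dimensional face F of the cone C^A = {β : β_1 ≥ ... ≥ β_n} indexed by (i_1,...,i_k) satisfies F ∩ L_0 ∩ ker A ≠ {0}, where L_0 = {β : β_1 + ... + β_n = 0}. -/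
open Finset

lemma hull_iff' {k d : ℕ} (v : Fin k → Fin d → ℝ) :
    (0 : Fin d → ℝ) ∈ convexHull ℝ (Set.range v) ↔
    ∃ t : Fin k → ℝ, (∀ l, 0 ≤ t l) ∧ (∑ l, t l) = 1 ∧ (∑ l, t l • v l) = 0 := by
  rw [convexHull_range_eq_exists_affineCombination]
  constructor
  · rintro ⟨S, w, hw0, hw1, hw⟩
    refine ⟨fun l => if l ∈ S then w l else 0, fun l => ?_, ?_, ?_⟩
    · by_cases h : l ∈ S <;> simp [h, hw0 l]
    · rw [Finset.sum_ite_mem, Finset.univ_inter, hw1]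
    · simp only [ite_smul, zero_smul]
      rw [Finset.sum_ite_mem, Finset.univ_inter]
      rwa [Finset.affineCombination_eq_linear_combination S v w hw1] at hw
  · rintro ⟨t, ht0, ht1, hts⟩
    exact ⟨Finset.univ, t, fun l _ => ht0 l, ht1, by
      rw [Finset.affineCombination_eq_linear_combination Finset.univ v t ht1, hts]⟩

open Finset

lemma sum_Iic_eq {n d : ℕ} (x : Fin n → Fin d → ℝ) (X : ℕ → Fin d → ℝ)
    (hX : ∀ (j : ℕ) (h : j < n), X j = x ⟨j, h⟩) (i : Fin n) :
    ∑ m ∈ Finset.Iic i, x m = ∑ j ∈ Finset.range ((i : ℕ) + 1), X j := by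
  have h1 : Finset.Iic i = Finset.univ.filter (· ≤ i) := by ext b; simp
  rw [h1, Finset.sum_filter]
  have h2 : ∑ m : Fin n, (if m ≤ i then x m else 0) =
      ∑ j ∈ Finset.range n, (if j ≤ (i : ℕ) then X j else 0) := by
    rw [← Fin.sum_univ_eq_sum_range (fun j => if j ≤ (i : ℕ) then X j else 0) n]
    refine Finset.sum_congr rfl fun m _ => ?_
    simp only [hX m m.isLt, Fin.eta, Fin.le_def]
  rw [h2]
  rw [← Finset.sum_subset (Finset.range_subset_range.mpr i.isLt) (fun j _ hj => ?_)]
  · refine Finset.sum_congr rfl fun j hj => ?_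
    rw [if_pos (by simpa [Nat.lt_succ_iff] using Finset.mem_range.mp hj)]
  · rw [if_neg (fun hji => hj (Finset.mem_range.mpr (by omega)))]

lemma abel_key {n d k : ℕ} (hn : 2 ≤ n) (x : Fin n → Fin d → ℝ) (hx : (∑ i, x i) = 0)
    (s : Fin n → Fin d → ℝ) (hs : ∀ i, s i = ∑ m ∈ Finset.Iic i, x m)
    (β : Fin n → ℝ) (ι : Fin k → Fin n) (hι : StrictMono ι) (hι' : ∀ l, (ι l : ℕ) + 1 < n)
    (hgap : ∀ m : Fin n, (∀ l, ι l ≠ m) → ∀ h : (m : ℕ) + 1 < n, β m = β ⟨(m : ℕ) + 1, h⟩) :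
    (∑ i, β i • x i) = ∑ l, (β (ι l) - β ⟨(ι l : ℕ) + 1, hι' l⟩) • s (ι l) := by
  set B : ℕ → ℝ := fun j => if h : j < n then β ⟨j, h⟩ else 0 with hB
  set X : ℕ → Fin d → ℝ := fun j => if h : j < n then x ⟨j, h⟩ else 0 with hXdef
  have hXv : ∀ (j : ℕ) (h : j < n), X j = x ⟨j, h⟩ := fun j h => dif_pos h
  have hBv : ∀ (j : ℕ) (h : j < n), B j = β ⟨j, h⟩ := fun j h => dif_pos h
  have h0 : (∑ i, β i • x i) = ∑ j ∈ Finset.range n, B j • X j := by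
    rw [← Fin.sum_univ_eq_sum_range (fun j => B j • X j) n]
    exact Finset.sum_congr rfl fun m _ => by rw [hBv m m.isLt, hXv m m.isLt, Fin.eta]
  have hXsum : ∑ j ∈ Finset.range n, X j = 0 := by
    rw [← Fin.sum_univ_eq_sum_range (fun j => X j) n, ← hx]
    exact Finset.sum_congr rfl fun m _ => by rw [hXv m m.isLt, Fin.eta]
  rw [h0, Finset.sum_range_by_parts, hXsum, smul_zero, zero_sub]
  have hG : ∀ (i : ℕ) (h : i < n), (∑ j ∈ Finset.range (i + 1), X j) = s ⟨i, h⟩ := by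
    intro i h
    rw [hs ⟨i, h⟩, sum_Iic_eq x X hXv ⟨i, h⟩]
  set T : Finset ℕ := Finset.univ.image (fun l => (ι l : ℕ)) with hT
  have hTsub : T ⊆ Finset.range (n - 1) := by
    intro a ha
    rw [hT, Finset.mem_image] at ha
    obtain ⟨l, -, rfl⟩ := ha
    have := hι' l
    rw [Finset.mem_range]; omega
  have hzero : ∀ i ∈ Finset.range (n - 1), i ∉ T →
      (B (i + 1) - B i) • (∑ j ∈ Finset.range (i + 1), X j) = 0 := by
    intro i hi hiT
    have hi1 : i + 1 < n := by have := Finset.mem_range.mp hi; omega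
    have hieq : β ⟨i, by omega⟩ = β ⟨i + 1, hi1⟩ := by
      refine hgap ⟨i, by omega⟩ (fun l hl => hiT ?_) hi1
      rw [hT, Finset.mem_image]
      exact ⟨l, Finset.mem_univ l, by rw [hl]⟩
    rw [hBv (i+1) hi1, hBv i (by omega), ← hieq, sub_self, zero_smul]
  rw [← Finset.sum_subset hTsub hzero, hT,
    Finset.sum_image (fun a _ b _ h => hι.injective (Fin.ext h))]
  rw [← Finset.sum_neg_distrib]
  refine Finset.sum_congr rfl fun l _ => ?_
  rw [hG (ι l) (by omega) ]
  rw [hBv ((ι l : ℕ) + 1) (hι' l), hBv (ι l) (by omega), Fin.eta, ← neg_smul, neg_sub]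

open Finset


/-- Let `x_1,...,x_n ∈ ℝ^d` (`n ≥ 2`) with `x_1 + ... + x_n = 0`, partial sums `s_i`,
and `A : ℝ^n → ℝ^d` the linear map with `A e_i = x_i`, i.e. `A β = Σ_i β_i x_i`.
For `1 ≤ i_1 < ... < i_k ≤ n-1` (a strictly monotone `ι : Fin k → Fin n` avoiding the
last index), the origin lies in the convex hull of `{s_{i_1},...,s_{i_k}}` iff the
`(k+1)`-face `F` of `C^A = {β : β_1 ≥ ... ≥ β_n}` indexed by `(i_1,...,i_k)` satisfies
`F ∩ L_0 ∩ ker A ≠ {0}`, where `L_0 = {β : β_1 + ... + β_n = 0}`. -/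
theorem stmt14 (d n k : ℕ) (hn : 2 ≤ n) (hk : 0 < k) (hkn : k ≤ n - 1)
    (x : Fin n → Fin d → ℝ) (hx : (∑ i, x i) = 0)
    (s : Fin n → Fin d → ℝ) (hs : ∀ i, s i = ∑ m ∈ Finset.Iic i, x m)
    (ι : Fin k → Fin n) (hι : StrictMono ι) (hι' : ∀ l, (ι l : ℕ) + 1 < n) :
    (0 : Fin d → ℝ) ∈ convexHull ℝ (Set.range fun l => s (ι l)) ↔
      ∃ β : Fin n → ℝ, β ≠ 0 ∧ (∑ i, β i) = 0 ∧ (∑ i, β i • x i) = 0 ∧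
        (∀ i j : Fin n, i ≤ j → β j ≤ β i) ∧
        (∀ m : Fin n, (∀ l, ι l ≠ m) →
          ∀ h : (m : ℕ) + 1 < n, β m = β ⟨(m : ℕ) + 1, h⟩) := by
  have hn0 : 0 < n := by omega
  have hnR : (n : ℝ) ≠ 0 := Nat.cast_ne_zero.mpr (by omega)
  rw [hull_iff' (fun l => s (ι l))]
  constructor
  · rintro ⟨t, ht0, ht1, hts⟩
    set β0 : Fin n → ℝ := fun i => ∑ l ∈ Finset.univ.filter (fun l => i ≤ ι l), t l with hβ0
    set c : ℝ := (∑ i, β0 i) / n with hc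
    have hkey : (∑ i, β0 i • x i) = ∑ l, t l • s (ι l) := by
      have e1 : ∀ i : Fin n, β0 i • x i = ∑ l : Fin k, if i ≤ ι l then t l • x i else 0 := by
        intro i
        rw [hβ0, Finset.sum_smul, ← Finset.sum_filter]
      simp only [e1]
      rw [Finset.sum_comm]
      refine Finset.sum_congr rfl fun l _ => ?_
      rw [← Finset.sum_filter]
      have h1 : Finset.univ.filter (fun i : Fin n => i ≤ ι l) = Finset.Iic (ι l) := by
        ext b; simp
      rw [h1, ← Finset.smul_sum, ← hs]
    refine ⟨fun i => β0 i - c, ?_, ?_, ?_, ?_, ?_⟩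
    · intro hzero
      have hz0 : β0 ⟨0, hn0⟩ - c = 0 := congrFun hzero ⟨0, hn0⟩
      have hzl : β0 ⟨n - 1, by omega⟩ - c = 0 := congrFun hzero ⟨n - 1, by omega⟩
      have hβ00 : β0 ⟨0, hn0⟩ = 1 := by
        rw [hβ0]
        simp only []
        rw [Finset.filter_true_of_mem (fun l _ => by simp [Fin.le_def]), ht1]
      have hβ0l : β0 ⟨n - 1, by omega⟩ = 0 := by
        rw [hβ0]
        simp only []
        rw [Finset.filter_false_of_mem (fun l _ => ?_), Finset.sum_empty]
        have := hι' l
        simp only [Fin.le_def, Fin.val_mk]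
        omega
      rw [hβ00] at hz0
      rw [hβ0l] at hzl
      linarith
    · rw [Finset.sum_sub_distrib, Finset.sum_const, Finset.card_univ, Fintype.card_fin,
        nsmul_eq_mul, hc, mul_div_cancel₀ _ hnR, sub_self]
    · have : (∑ i, (β0 i - c) • x i) = (∑ i, β0 i • x i) - c • (∑ i, x i) := by
        rw [Finset.smul_sum, ← Finset.sum_sub_distrib]
        exact Finset.sum_congr rfl fun i _ => by rw [sub_smul]
      rw [this, hkey, hts, hx, smul_zero, sub_zero]
    · intro i j hij
      have : β0 j ≤ β0 i := by
        rw [hβ0]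
        refine Finset.sum_le_sum_of_subset_of_nonneg (fun l hl => ?_) (fun l _ _ => ht0 l)
        rw [Finset.mem_filter] at hl ⊢
        exact ⟨hl.1, le_trans hij hl.2⟩
      dsimp only
      linarith
    · intro m hm h
      have : β0 m = β0 ⟨(m : ℕ) + 1, h⟩ := by
        rw [hβ0]
        refine Finset.sum_congr (Finset.filter_congr fun l _ => ?_) fun _ _ => rfl
        have hne : (ι l : ℕ) ≠ (m : ℕ) := fun he => hm l (Fin.ext he)
        simp only [Fin.le_def, Fin.val_mk]
        constructor <;> intro <;> omega
      simp only [this]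
  · rintro ⟨β, hβne, hβsum, hβx, hmono, hgap⟩
    set w : Fin k → ℝ := fun l => β (ι l) - β ⟨(ι l : ℕ) + 1, hι' l⟩ with hwdef
    have hw0 : ∀ l, 0 ≤ w l := by
      intro l
      rw [hwdef]
      simp only []
      have : ι l ≤ (⟨(ι l : ℕ) + 1, hι' l⟩ : Fin n) := by simp [Fin.le_def]
      linarith [hmono _ _ this]
    have habel : (∑ l, w l • s (ι l)) = 0 := by
      show (∑ l, (β (ι l) - β ⟨(ι l : ℕ) + 1, hι' l⟩) • s (ι l)) = 0
      rw [← abel_key hn x hx s hs β ι hι hι' hgap]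
      exact hβx
    have hWne : (∑ l, w l) ≠ 0 := by
      intro hW
      have hall : ∀ l ∈ Finset.univ, w l = 0 :=
        (Finset.sum_eq_zero_iff_of_nonneg (fun l _ => hw0 l)).mp hW
      have hstep : ∀ (j : ℕ) (hj : j + 1 < n), β ⟨j, by omega⟩ = β ⟨j + 1, hj⟩ := by
        intro j hj
        by_cases hr : ∃ l, ι l = ⟨j, by omega⟩
        · obtain ⟨l, hl⟩ := hr
          have hv : (ι l : ℕ) = j := by rw [hl]
          have hwl : w l = 0 := hall l (Finset.mem_univ l)
          rw [hwdef] at hwl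
          simp only [] at hwl
          have h2 : (⟨(ι l : ℕ) + 1, hι' l⟩ : Fin n) = ⟨j + 1, hj⟩ := by
            simp [Fin.ext_iff, hv]
          rw [h2, hl] at hwl
          exact sub_eq_zero.mp hwl
        · exact hgap ⟨j, by omega⟩ (fun l hl => hr ⟨l, hl⟩) hj
      have hconst : ∀ (j : ℕ) (hj : j < n), β ⟨j, hj⟩ = β ⟨0, hn0⟩ := by
        intro j
        induction j with
        | zero => intro hj; rfl
        | succ m ih =>
          intro hj
          rw [← hstep m hj, ih (by omega)]
      have hc0 : β ⟨0, hn0⟩ = 0 := by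
        have : (∑ i, β i) = (n : ℝ) * β ⟨0, hn0⟩ := by
          rw [Finset.sum_congr rfl fun i _ => (by rw [← hconst i.1 i.isLt] :
            β i = β ⟨0, hn0⟩)]
          rw [Finset.sum_const, Finset.card_univ, Fintype.card_fin, nsmul_eq_mul]
        rw [hβsum] at this
        exact (mul_eq_zero.mp this.symm).resolve_left hnR
      refine hβne (funext fun i => ?_)
      have := hconst i.1 i.isLt
      rw [Fin.eta] at this
      rw [this, hc0]
      rfl
    have hWpos : 0 < ∑ l, w l :=
      lt_of_le_of_ne (Finset.sum_nonneg fun l _ => hw0 l) (Ne.symm hWne)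
    refine ⟨fun l => w l / (∑ l, w l), fun l => div_nonneg (hw0 l) hWpos.le, ?_, ?_⟩
    · rw [← Finset.sum_div, div_self hWne]
    · have : (∑ l, (w l / (∑ l', w l')) • s (ι l)) =
          (∑ l', w l')⁻¹ • (∑ l, w l • s (ι l)) := by
        rw [Finset.smul_sum]
        refine Finset.sum_congr rfl fun l _ => ?_
        rw [smul_smul, div_eq_inv_mul]
      rw [this, habel, smul_zero]
end

section
/- Let ξ_1,ξ_2,... be i.i.d. R^d-valued random vectors with ξ_1 distributed as -ξ_1. Then the following are equivalent: (i) for every n and every 1 ≤ i_1 < ... < i_d ≤ n, the vectors S_{i_1},...,S_{i_d} are a.s. linearly independent; (ii) P[ξ_1 ∈ H] = 0 for every affine hyperplane H ⊂ R^d; (iii) P[S_i ∈ H_0] = 0 for every linear hyperplane H_0 ⊂ R^d and every i ≥ 1. -/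
open Finset MeasureTheory ProbabilityTheory

lemma aux_slice {Ω α β : Type*} [MeasurableSpace Ω] [MeasurableSpace α] [MeasurableSpace β]
    (P : Measure Ω) [IsProbabilityMeasure P]
    {X : Ω → α} {Y : Ω → β} (hX : Measurable X) (hY : Measurable Y)
    (h : IndepFun X Y P) {A : Set (α × β)} (hA : MeasurableSet A)
    (hslice : ∀ a, P.map Y {b | (a, b) ∈ A} = 0) :
    P {ω | (X ω, Y ω) ∈ A} = 0 := by
  haveI : IsProbabilityMeasure (P.map Y) := Measure.isProbabilityMeasure_map hY.aemeasurable
  haveI : IsProbabilityMeasure (P.map X) := Measure.isProbabilityMeasure_map hX.aemeasurable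
  have hmap := (indepFun_iff_map_prod_eq_prod_map_map hX.aemeasurable hY.aemeasurable).mp h
  have h1 : P {ω | (X ω, Y ω) ∈ A} = P.map (fun ω => (X ω, Y ω)) A := by
    rw [Measure.map_apply (hX.prodMk hY) hA]; rfl
  rw [h1, hmap, Measure.prod_apply hA]
  have h2 : ∀ a, P.map Y (Prod.mk a ⁻¹' A) = 0 := fun a => hslice a
  simp [h2]

lemma aux_symm_eq {Ω : Type*} [MeasurableSpace Ω] (P : Measure Ω)
    {d : ℕ} (ξ0 : Ω → Fin d → ℝ) (hm : Measurable ξ0)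
    (hsymm : P.map ξ0 = P.map (fun ω => -(ξ0 ω)))
    (f : (Fin d → ℝ) →ₗ[ℝ] ℝ) (c : ℝ) :
    P {ω | f (ξ0 ω) = -c} = P {ω | f (ξ0 ω) = c} := by
  have hfm : Measurable f := f.continuous_of_finiteDimensional.measurable
  have h1 : P {ω | f (ξ0 ω) = -c} = P.map ξ0 (f ⁻¹' {-c}) := by
    rw [Measure.map_apply hm (hfm (measurableSet_singleton _))]; rfl
  rw [h1, hsymm, Measure.map_apply (show Measurable (fun ω => -ξ0 ω) from hm.neg) (hfm (measurableSet_singleton _))]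
  congr 1
  ext ω
  simp [neg_eq_iff_eq_neg]

lemma aux_sum_null {Ω : Type*} [MeasurableSpace Ω] (P : Measure Ω) [IsProbabilityMeasure P]
    (d : ℕ) (ξ : ℕ → Ω → Fin d → ℝ) (hmeas : ∀ i, Measurable (ξ i))
    (hindep : iIndepFun ξ P)
    (hid : ∀ i, P.map (ξ i) = P.map (ξ 0))
    (hii : ∀ (f : (Fin d → ℝ) →ₗ[ℝ] ℝ) (c : ℝ), f ≠ 0 → P {ω | f (ξ 0 ω) = c} = 0)
    (g : (Fin d → ℝ) →ₗ[ℝ] ℝ) (hg : g ≠ 0) (s : Finset ℕ) (hs : s.Nonempty) (c : ℝ) :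
    P {ω | g (∑ m ∈ s, ξ m ω) = c} = 0 := by
  classical
  obtain ⟨j, hj⟩ := hs
  have hgm : Measurable g := g.continuous_of_finiteDimensional.measurable
  set X : Ω → Fin d → ℝ := fun ω => ∑ m ∈ s.erase j, ξ m ω with hXdef
  have hXm : Measurable X := Finset.measurable_sum _ fun m _ => hmeas m
  have hind : IndepFun X (ξ j) P := by
    have h := hindep.indepFun_finset_sum_of_notMem hmeas (Finset.notMem_erase j s)
    have hXe : X = ∑ m ∈ s.erase j, ξ m := by
      funext ω; rw [hXdef, Finset.sum_apply]
    rwa [hXe]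
  set A : Set ((Fin d → ℝ) × (Fin d → ℝ)) := {p | g (p.1 + p.2) = c} with hAdef
  have hA : MeasurableSet A :=
    (hgm.comp (measurable_fst.add measurable_snd)) (measurableSet_singleton c)
  have hset : {ω | g (∑ m ∈ s, ξ m ω) = c} = {ω | (X ω, ξ j ω) ∈ A} := by
    ext ω
    simp only [Set.mem_setOf_eq, hAdef, hXdef]
    rw [Finset.sum_erase_add s _ hj]
  rw [hset]
  refine aux_slice P hXm (hmeas j) hind hA ?_
  intro a
  have hmble : MeasurableSet {b : Fin d → ℝ | (a, b) ∈ A} := by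
    have : {b : Fin d → ℝ | (a, b) ∈ A} = (fun b => g (a + b)) ⁻¹' {c} := rfl
    rw [this]
    exact (hgm.comp (measurable_const.add measurable_id)) (measurableSet_singleton c)
  rw [hid j, Measure.map_apply (hmeas 0) hmble]
  have : (ξ 0) ⁻¹' {b | (a, b) ∈ A} = {ω | g (ξ 0 ω) = c - g a} := by
    ext ω
    simp only [Set.mem_preimage, Set.mem_setOf_eq, hAdef, map_add]
    constructor <;> intro h <;> linarith
  rw [this]
  exact hii g (c - g a) hg

lemma aux_key {Ω : Type*} [MeasurableSpace Ω] (P : Measure Ω) [IsProbabilityMeasure P]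
    (d : ℕ) (hd : 0 < d) (ξ : ℕ → Ω → Fin d → ℝ) (hmeas : ∀ i, Measurable (ξ i))
    (hindep : iIndepFun ξ P)
    (hid : ∀ i, P.map (ξ i) = P.map (ξ 0))
    (hii : ∀ (f : (Fin d → ℝ) →ₗ[ℝ] ℝ) (c : ℝ), f ≠ 0 → P {ω | f (ξ 0 ω) = c} = 0)
    (S : ℕ → Ω → Fin d → ℝ) (hS : ∀ i ω, S i ω = ∑ m ∈ Finset.range (i + 1), ξ m ω)
    (ι : Fin d → ℕ) (hι : StrictMono ι) :
    P {ω | ¬ LinearIndependent ℝ (fun l => S (ι l) ω)} = 0 := by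
  classical
  have hSm : ∀ i, Measurable (S i) := by
    intro i
    have : S i = fun ω => ∑ m ∈ Finset.range (i + 1), ξ m ω := funext (hS i)
    rw [this]
    exact Finset.measurable_sum _ fun m _ => hmeas m
  have main : ∀ k, ∀ hk : k ≤ d,
      P {ω | ¬ LinearIndependent ℝ (fun l : Fin k => S (ι (Fin.castLE hk l)) ω)} = 0 := by
    intro k
    induction k with
    | zero =>
      intro hk
      have he : {ω | ¬ LinearIndependent ℝ (fun l : Fin 0 => S (ι (Fin.castLE hk l)) ω)} = ∅ := by
        ext ω; simp [linearIndependent_empty_type]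
      rw [he, measure_empty]
    | succ k ih =>
      intro hk1
      have hk : k ≤ d := Nat.le_of_succ_le hk1
      have hkd : k < d := hk1
      set K : Fin d := ⟨k, hkd⟩ with hKdef
      set X : Ω → Fin k → Fin d → ℝ := fun ω l => S (ι (Fin.castLE hk l)) ω with hXdef
      obtain ⟨start, c₀, hc₀m, hc₀span, hc₀X, hlt_start, hstart_le⟩ :
          ∃ (start : ℕ) (c₀ : (Fin k → Fin d → ℝ) → (Fin d → ℝ)),
            Measurable c₀ ∧ (∀ v, c₀ v ∈ Submodule.span ℝ (Set.range v)) ∧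
            (∀ ω, ∑ m ∈ Finset.range start, ξ m ω = c₀ (X ω)) ∧
            (∀ l : Fin k, ι (Fin.castLE hk l) < start) ∧ start ≤ ι K := by
        rcases Nat.eq_zero_or_pos k with h0 | h0
        · subst h0
          exact ⟨0, fun _ => 0, measurable_const, fun v => Submodule.zero_mem _,
            fun ω => by simp, fun l => l.elim0, Nat.zero_le _⟩
        · have hk1d : k - 1 < d := lt_of_lt_of_le (Nat.sub_lt h0 one_pos) hk
          refine ⟨ι ⟨k - 1, hk1d⟩ + 1, fun v => v ⟨k - 1, Nat.sub_lt h0 one_pos⟩,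
            measurable_pi_apply _, fun v => Submodule.subset_span ⟨_, rfl⟩, fun ω => ?_,
            fun l => ?_, ?_⟩
          · exact (hS _ ω).symm
          · refine Nat.lt_succ_of_le (hι.monotone ?_)
            rw [Fin.le_def]
            simp only [Fin.coe_castLE]
            omega
          · refine Nat.succ_le_of_lt (hι ?_)
            rw [Fin.lt_def]
            show k - 1 < k
            omega
      set Y : Ω → Fin d → ℝ := fun ω => ∑ m ∈ Finset.Ico start (ι K + 1), ξ m ω with hYdef
      have hXm : Measurable X := measurable_pi_lambda _ fun l => hSm _
      have hYm : Measurable Y := Finset.measurable_sum _ fun m _ => hmeas m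
      -- the decomposition of the last vector
      have hlast : ∀ ω, S (ι K) ω = c₀ (X ω) + Y ω := by
        intro ω
        rw [hS, ← Finset.sum_range_add_sum_Ico _ (Nat.le_succ_of_le hstart_le), hc₀X]
      have hsnoc : ∀ ω, (fun l : Fin (k + 1) => S (ι (Fin.castLE hk1 l)) ω)
          = Fin.snoc (X ω) (c₀ (X ω) + Y ω) := by
        intro ω
        funext l
        refine Fin.lastCases ?_ ?_ l
        · rw [Fin.snoc_last]
          have hcl : Fin.castLE hk1 (Fin.last k) = K := Fin.ext rfl
          rw [hcl]
          exact hlast ω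
        · intro i
          rw [Fin.snoc_castSucc]
          have hci : Fin.castLE hk1 (Fin.castSucc i) = Fin.castLE hk i := Fin.ext rfl
          rw [hci]
      -- independence of X and Y
      have hind : IndepFun X Y P := by
        have hdisj : Disjoint (Finset.range start) (Finset.Ico start (ι K + 1)) := by
          rw [Finset.disjoint_left]
          intro a ha ha'
          rw [Finset.mem_range] at ha
          rw [Finset.mem_Ico] at ha'
          omega
        have hbase := hindep.indepFun_finset (Finset.range start)
          (Finset.Ico start (ι K + 1)) hdisj hmeas
        set F : ({x // x ∈ Finset.range start} → Fin d → ℝ) → Fin k → Fin d → ℝ :=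
          fun u l => ∑ m : {x // x ∈ Finset.range start},
            if (m : ℕ) < ι (Fin.castLE hk l) + 1 then u m else 0 with hFdef
        set G : ({x // x ∈ Finset.Ico start (ι K + 1)} → Fin d → ℝ) → Fin d → ℝ :=
          fun u => ∑ m : {x // x ∈ Finset.Ico start (ι K + 1)}, u m with hGdef
        have hFm : Measurable F := by
          refine measurable_pi_lambda _ fun l => Finset.measurable_sum _ fun m _ => ?_
          split_ifs
          · exact measurable_pi_apply m
          · exact measurable_const
        have hGm : Measurable G := Finset.measurable_sum _ fun m _ => measurable_pi_apply m
        have hXF : X = F ∘ (fun ω (i : {x // x ∈ Finset.range start}) => ξ i ω) := by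
          funext ω l
          have h1 : (F ∘ (fun ω (i : {x // x ∈ Finset.range start}) => ξ i ω)) ω l
              = ∑ m ∈ Finset.range start,
                  if m < ι (Fin.castLE hk l) + 1 then ξ m ω else 0 := by
            simp only [Function.comp_apply, hFdef]
            exact Finset.sum_coe_sort (Finset.range start)
              (fun m => if m < ι (Fin.castLE hk l) + 1 then ξ m ω else 0)
          rw [h1, ← Finset.sum_filter]
          have h2 : (Finset.range start).filter (fun m => m < ι (Fin.castLE hk l) + 1)
              = Finset.range (ι (Fin.castLE hk l) + 1) := by
            ext m
            simp only [Finset.mem_filter, Finset.mem_range]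
            have := hlt_start l
            omega
          rw [h2]
          exact hS _ ω
        have hYG : Y = G ∘ (fun ω (i : {x // x ∈ Finset.Ico start (ι K + 1)}) => ξ i ω) := by
          funext ω
          simp only [Function.comp_apply, hGdef, hYdef]
          exact (Finset.sum_coe_sort (Finset.Ico start (ι K + 1)) (fun m => ξ m ω)).symm
        rw [hXF, hYG]
        exact hbase.comp hFm hGm
      -- the bad set A in the product space
      set A : Set ((Fin k → Fin d → ℝ) × (Fin d → ℝ)) :=
        {p | LinearIndependent ℝ p.1 ∧
          ¬ LinearIndependent ℝ (Fin.snoc p.1 (c₀ p.1 + p.2) : Fin (k + 1) → Fin d → ℝ)}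
        with hAdef
      have hLI1 : MeasurableSet {v : Fin k → Fin d → ℝ | LinearIndependent ℝ v} :=
        isOpen_setOf_linearIndependent.measurableSet
      have hLI2 : MeasurableSet {v : Fin (k + 1) → Fin d → ℝ | LinearIndependent ℝ v} :=
        isOpen_setOf_linearIndependent.measurableSet
      have hΦm : Measurable (fun p : (Fin k → Fin d → ℝ) × (Fin d → ℝ) =>
          (Fin.snoc p.1 (c₀ p.1 + p.2) : Fin (k + 1) → Fin d → ℝ)) := by
        refine measurable_pi_lambda _ fun j => ?_
        refine Fin.lastCases ?_ ?_ j
        · simp only [Fin.snoc_last]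
          exact (hc₀m.comp measurable_fst).add measurable_snd
        · intro i
          simp only [Fin.snoc_castSucc]
          exact (measurable_pi_apply i).comp measurable_fst
      have hA : MeasurableSet A := by
        have hAeq : A = (Prod.fst ⁻¹' {v : Fin k → Fin d → ℝ | LinearIndependent ℝ v}) ∩
            ((fun p : (Fin k → Fin d → ℝ) × (Fin d → ℝ) =>
              (Fin.snoc p.1 (c₀ p.1 + p.2) : Fin (k + 1) → Fin d → ℝ)) ⁻¹'
              {v : Fin (k + 1) → Fin d → ℝ | LinearIndependent ℝ v})ᶜ := rfl
        rw [hAeq]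
        exact (measurable_fst hLI1).inter (hΦm hLI2).compl
      -- slices of A are null
      have hslice : ∀ a, P.map Y {b | (a, b) ∈ A} = 0 := by
        intro a
        by_cases hLIa : LinearIndependent ℝ a
        · have hsl : {b | (a, b) ∈ A} ⊆ (Submodule.span ℝ (Set.range a) : Set (Fin d → ℝ)) := by
            intro b hb
            obtain ⟨-, hdep⟩ := hb
            rw [linearIndependent_fin_snoc] at hdep
            have hmem : c₀ a + b ∈ Submodule.span ℝ (Set.range a) := by
              by_contra hmem
              exact hdep ⟨hLIa, hmem⟩
            have h3 := Submodule.sub_mem _ hmem (hc₀span a)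
            simpa using h3
          have hle : Module.finrank ℝ ↥(Submodule.span ℝ (Set.range a)) ≤ k := by
            have h4 := finrank_range_le_card (R := ℝ) (M := Fin d → ℝ) a
            simpa [Set.finrank] using h4
          have hne : Submodule.span ℝ (Set.range a) ≠ ⊤ := by
            intro htop
            rw [htop, finrank_top] at hle
            rw [Module.finrank_fin_fun] at hle
            omega
          obtain ⟨g, hg0, hgmap⟩ :=
            Submodule.exists_dual_map_eq_bot_of_lt_top (lt_top_iff_ne_top.mpr hne) inferInstance
          have hsub2 : (Submodule.span ℝ (Set.range a) : Set (Fin d → ℝ)) ⊆ g ⁻¹' {0} := by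
            intro x hx
            have h5 : g x ∈ Submodule.map g (Submodule.span ℝ (Set.range a)) :=
              Submodule.mem_map_of_mem hx
            rw [hgmap] at h5
            simpa using h5
          have hgm : Measurable g := g.continuous_of_finiteDimensional.measurable
          refine le_antisymm ?_ zero_le
          refine le_trans (measure_mono (Set.Subset.trans hsl hsub2)) ?_
          rw [Measure.map_apply hYm (hgm (measurableSet_singleton 0))]
          have h6 : Y ⁻¹' (g ⁻¹' {0})
              = {ω | g (∑ m ∈ Finset.Ico start (ι K + 1), ξ m ω) = 0} := rfl
          rw [h6]
          refine le_of_eq (aux_sum_null P d ξ hmeas hindep hid hii g hg0 _ ?_ 0)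
          refine ⟨ι K, ?_⟩
          rw [Finset.mem_Ico]
          omega
        · have hempty : {b | (a, b) ∈ A} = (∅ : Set (Fin d → ℝ)) := by
            ext b
            simp only [Set.mem_setOf_eq, Set.mem_empty_iff_false, iff_false, hAdef]
            rintro ⟨h7, -⟩
            exact hLIa h7
          rw [hempty]
          simp
      have hAnull : P {ω | (X ω, Y ω) ∈ A} = 0 := aux_slice P hXm hYm hind hA hslice
      -- combine
      have hsub : {ω | ¬ LinearIndependent ℝ (fun l : Fin (k + 1) => S (ι (Fin.castLE hk1 l)) ω)}
          ⊆ {ω | ¬ LinearIndependent ℝ (fun l : Fin k => S (ι (Fin.castLE hk l)) ω)}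
            ∪ {ω | (X ω, Y ω) ∈ A} := by
        intro ω hω
        by_cases hLIx : LinearIndependent ℝ (X ω)
        · right
          refine ⟨hLIx, ?_⟩
          rw [← hsnoc ω]
          exact hω
        · left
          exact hLIx
      refine le_antisymm ?_ zero_le
      calc P {ω | ¬ LinearIndependent ℝ (fun l : Fin (k + 1) => S (ι (Fin.castLE hk1 l)) ω)}
          ≤ P ({ω | ¬ LinearIndependent ℝ (fun l : Fin k => S (ι (Fin.castLE hk l)) ω)}
              ∪ {ω | (X ω, Y ω) ∈ A}) := measure_mono hsub
        _ ≤ P {ω | ¬ LinearIndependent ℝ (fun l : Fin k => S (ι (Fin.castLE hk l)) ω)}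
              + P {ω | (X ω, Y ω) ∈ A} := measure_union_le _ _
        _ = 0 := by rw [ih hk, hAnull, add_zero]
  exact main d le_rfl

/-- For i.i.d. symmetric random vectors `ξ_1,ξ_2,...` in `ℝ^d` with partial sums `S_i`,
the following are equivalent: (i) any `d` of the partial sums are a.s. linearly
independent; (ii) every affine hyperplane `{y : f(y) = c}` (with `f` a nonzero linear
functional) carries no mass of `ξ_1`; (iii) every linear hyperplane `{y : f(y) = 0}`
carries no mass of any `S_i`. -/
theorem stmt16 {Ω : Type*} [MeasurableSpace Ω] (P : Measure Ω) [IsProbabilityMeasure P]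
    (d : ℕ) (hd : 0 < d)
    (ξ : ℕ → Ω → Fin d → ℝ) (hmeas : ∀ i, Measurable (ξ i))
    (hindep : ProbabilityTheory.iIndepFun ξ P)
    (hid : ∀ i, P.map (ξ i) = P.map (ξ 0))
    (hsymm : P.map (ξ 0) = P.map (fun ω => -(ξ 0 ω)))
    (S : ℕ → Ω → Fin d → ℝ) (hS : ∀ i ω, S i ω = ∑ m ∈ Finset.range (i + 1), ξ m ω) :
    ((∀ ι : Fin d → ℕ, StrictMono ι →
        P {ω | ¬ LinearIndependent ℝ (fun l => S (ι l) ω)} = 0) ↔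
      (∀ (f : (Fin d → ℝ) →ₗ[ℝ] ℝ) (c : ℝ), f ≠ 0 → P {ω | f (ξ 0 ω) = c} = 0)) ∧
    ((∀ (f : (Fin d → ℝ) →ₗ[ℝ] ℝ) (c : ℝ), f ≠ 0 → P {ω | f (ξ 0 ω) = c} = 0) ↔
      (∀ (f : (Fin d → ℝ) →ₗ[ℝ] ℝ), f ≠ 0 → ∀ i : ℕ, P {ω | f (S i ω) = 0} = 0)) := by
  classical
  -- (i) → (ii)
  have h_i_ii : (∀ ι : Fin d → ℕ, StrictMono ι →
      P {ω | ¬ LinearIndependent ℝ (fun l => S (ι l) ω)} = 0) →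
      (∀ (f : (Fin d → ℝ) →ₗ[ℝ] ℝ) (c : ℝ), f ≠ 0 → P {ω | f (ξ 0 ω) = c} = 0) := by
    intro h1 f c hf
    have hfm : Measurable f := f.continuous_of_finiteDimensional.measurable
    set p := P {ω | f (ξ 0 ω) = c} with hp
    set B : ℕ → Set (Fin d → ℝ) := fun m => if Even m then f ⁻¹' {c} else f ⁻¹' {-c} with hB
    have hBmeas : ∀ m, MeasurableSet (B m) := by
      intro m
      simp only [hB]
      split_ifs
      · exact hfm (measurableSet_singleton _)
      · exact hfm (measurableSet_singleton _)
    have hprod : P (⋂ m ∈ Finset.range (2 * d), ξ m ⁻¹' B m)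
        = ∏ m ∈ Finset.range (2 * d), P (ξ m ⁻¹' B m) :=
      hindep.meas_biInter (fun m _ => ⟨B m, hBmeas m, rfl⟩)
    have hsing : ∀ m, P (ξ m ⁻¹' B m) = p := by
      intro m
      have h2 : P (ξ m ⁻¹' B m) = P.map (ξ 0) (B m) := by
        rw [← hid m, Measure.map_apply (hmeas m) (hBmeas m)]
      rw [h2]
      by_cases hm : Even m
      · rw [hB]
        simp only [if_pos hm]
        rw [Measure.map_apply (hmeas 0) (hfm (measurableSet_singleton _))]
        rfl
      · rw [hB]
        simp only [if_neg hm]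
        rw [Measure.map_apply (hmeas 0) (hfm (measurableSet_singleton _))]
        exact aux_symm_eq P (ξ 0) (hmeas 0) hsymm f c
    have hmono : StrictMono (fun l : Fin d => 2 * (l : ℕ) + 1) := by
      intro a b hab
      have := Fin.lt_def.mp hab
      show 2 * (a : ℕ) + 1 < 2 * (b : ℕ) + 1
      omega
    have hsubset : (⋂ m ∈ Finset.range (2 * d), ξ m ⁻¹' B m)
        ⊆ {ω | ¬ LinearIndependent ℝ (fun l : Fin d => S (2 * (l : ℕ) + 1) ω)} := by
      intro ω hω
      simp only [Set.mem_iInter] at hω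
      have hval : ∀ m, m < 2 * d → f (ξ m ω) = if Even m then c else -c := by
        intro m hm
        have h3 := hω m (Finset.mem_range.mpr hm)
        simp only [hB] at h3
        split_ifs with he
        · rw [if_pos he] at h3; exact h3
        · rw [if_neg he] at h3; exact h3
      have hzero : ∀ l : Fin d, f (S (2 * (l : ℕ) + 1) ω) = 0 := by
        intro l
        rw [hS, map_sum]
        have key : ∀ n, n ≤ d → ∑ m ∈ Finset.range (2 * n), f (ξ m ω) = 0 := by
          intro n
          induction n with
          | zero => intro _; simp
          | succ n ihn =>
            intro hn
            have h4 : 2 * (n + 1) = 2 * n + 1 + 1 := by ring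
            rw [h4, Finset.sum_range_succ, Finset.sum_range_succ, ihn (by omega)]
            have he : Even (2 * n) := even_two_mul n
            have ho : ¬ Even (2 * n + 1) := by simp [Nat.even_add_one, he]
            rw [hval (2 * n) (by omega), hval (2 * n + 1) (by omega), if_pos he, if_neg ho]
            ring
        have h5 : 2 * (l : ℕ) + 1 + 1 = 2 * ((l : ℕ) + 1) := by ring
        rw [h5]
        exact key _ (by omega)
      intro hLI
      haveI : Nonempty (Fin d) := ⟨⟨0, hd⟩⟩
      have hcard : Fintype.card (Fin d) = Module.finrank ℝ (Fin d → ℝ) := by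
        simp [Module.finrank_fin_fun]
      have hspan := hLI.span_eq_top_of_card_eq_finrank hcard
      have hzerof : f = 0 := by
        refine LinearMap.ext_on hspan ?_
        rintro x ⟨l, rfl⟩
        simpa using hzero l
      exact hf hzerof
    have h0 := h1 (fun l : Fin d => 2 * (l : ℕ) + 1) hmono
    have hpow : p ^ (2 * d) = 0 := by
      refine le_antisymm ?_ zero_le
      calc p ^ (2 * d) = ∏ m ∈ Finset.range (2 * d), P (ξ m ⁻¹' B m) := by
            rw [Finset.prod_congr rfl fun m _ => hsing m, Finset.prod_const, Finset.card_range]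
        _ = P (⋂ m ∈ Finset.range (2 * d), ξ m ⁻¹' B m) := hprod.symm
        _ ≤ P {ω | ¬ LinearIndependent ℝ (fun l : Fin d => S (2 * (l : ℕ) + 1) ω)} :=
            measure_mono hsubset
        _ = 0 := h0
    exact (pow_eq_zero_iff (by omega)).mp hpow
  -- (iii) → (ii)
  have h_iii_ii : (∀ (f : (Fin d → ℝ) →ₗ[ℝ] ℝ), f ≠ 0 → ∀ i : ℕ, P {ω | f (S i ω) = 0} = 0) →
      (∀ (f : (Fin d → ℝ) →ₗ[ℝ] ℝ) (c : ℝ), f ≠ 0 → P {ω | f (ξ 0 ω) = c} = 0) := by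
    intro h3 f c hf
    have hfm : Measurable f := f.continuous_of_finiteDimensional.measurable
    have hind : IndepFun (ξ 0) (ξ 1) P := hindep.indepFun (by norm_num)
    have hmul := hind.measure_inter_preimage_eq_mul (f ⁻¹' {c}) (f ⁻¹' {-c})
      (hfm (measurableSet_singleton c)) (hfm (measurableSet_singleton (-c)))
    have h1s : P (ξ 1 ⁻¹' (f ⁻¹' {-c})) = P {ω | f (ξ 0 ω) = c} := by
      have e1 : P (ξ 1 ⁻¹' (f ⁻¹' {-c})) = P.map (ξ 0) (f ⁻¹' {-c}) := by
        rw [← hid 1, Measure.map_apply (hmeas 1) (hfm (measurableSet_singleton _))]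
      rw [e1, Measure.map_apply (hmeas 0) (hfm (measurableSet_singleton _))]
      exact aux_symm_eq P (ξ 0) (hmeas 0) hsymm f c
    have hsub : ξ 0 ⁻¹' (f ⁻¹' {c}) ∩ ξ 1 ⁻¹' (f ⁻¹' {-c}) ⊆ {ω | f (S 1 ω) = 0} := by
      rintro ω ⟨h01, h11⟩
      have hS1 : S 1 ω = ξ 0 ω + ξ 1 ω := by
        rw [hS, Finset.sum_range_succ, Finset.sum_range_one]
      have ha : f (ξ 0 ω) = c := h01
      have hb : f (ξ 1 ω) = -c := h11
      simp only [Set.mem_setOf_eq, hS1, map_add, ha, hb]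
      ring
    have hle : P {ω | f (ξ 0 ω) = c} * P {ω | f (ξ 0 ω) = c} ≤ 0 := by
      calc P {ω | f (ξ 0 ω) = c} * P {ω | f (ξ 0 ω) = c}
          = P (ξ 0 ⁻¹' (f ⁻¹' {c})) * P (ξ 1 ⁻¹' (f ⁻¹' {-c})) := by rw [h1s]; rfl
        _ = P (ξ 0 ⁻¹' (f ⁻¹' {c}) ∩ ξ 1 ⁻¹' (f ⁻¹' {-c})) := hmul.symm
        _ ≤ P {ω | f (S 1 ω) = 0} := measure_mono hsub
        _ = 0 := h3 f hf 1
    have hpp : P {ω | f (ξ 0 ω) = c} * P {ω | f (ξ 0 ω) = c} = 0 :=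
      le_antisymm hle zero_le
    rcases mul_eq_zero.mp hpp with h | h <;> exact h
  -- (ii) → (iii)
  have h_ii_iii : (∀ (f : (Fin d → ℝ) →ₗ[ℝ] ℝ) (c : ℝ), f ≠ 0 → P {ω | f (ξ 0 ω) = c} = 0) →
      (∀ (f : (Fin d → ℝ) →ₗ[ℝ] ℝ), f ≠ 0 → ∀ i : ℕ, P {ω | f (S i ω) = 0} = 0) := by
    intro hii f hf i
    have hset : {ω | f (S i ω) = 0}
        = {ω | f (∑ m ∈ Finset.range (i + 1), ξ m ω) = 0} := by
      ext ω
      rw [Set.mem_setOf_eq, Set.mem_setOf_eq, hS]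
    rw [hset]
    exact aux_sum_null P d ξ hmeas hindep hid hii f hf (Finset.range (i + 1))
      ⟨0, by simp⟩ 0
  refine ⟨⟨h_i_ii, fun hii ι hι => aux_key P d hd ξ hmeas hindep hid hii S hS ι hι⟩,
    ⟨h_ii_iii, fun h3 f c hf => h_iii_ii h3 f c hf⟩⟩
end
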